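/- arXiv:2208.13240 — 4 statements merged into one kernel-verified Lean document; each statement's English description precedes it below -/
import Mathlib

section
/- Let $p_1, \ldots, p_\ell$ be distinct primes and $a$ an integer with $\gcd(a, p_1 \cdots p_\ell) = 1$. Then $a$ generates a subgroup of maximal order $\lambda(p_1 \cdots p_\ell)$ in $(\mathbb{Z}/p_1\cdots p_\ell\mathbb{Z})^*$ if and only if for every prime $q$ dividing $\lambda(p_1 \cdots p_\ell)$, there exists $p \in M_q(p_1, \ldots, p_\ell)$ such that $a$ is not a $q$-th power residue modulo $p$. -/
/-- Units of a pi type are the pi type of units. -/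
def myPiUnits {ι : Type*} {M : ι → Type*} [∀ i, Monoid (M i)] :
    (∀ i, M i)ˣ ≃* ∀ i, (M i)ˣ where
  toFun u i := ⟨u.val i, u.inv i, congrFun u.val_inv i, congrFun u.inv_val i⟩
  invFun f :=
    ⟨fun i => (f i : M i), fun i => ((f i)⁻¹ : (M i)ˣ),
      funext fun i => (f i).val_inv, funext fun i => (f i).inv_val⟩
  left_inv u := by ext i <;> rfl
  right_inv f := by ext i <;> rfl
  map_mul' u v := by ext i <;> rfl

lemma myOrderOf_pi {ι : Type*} [Fintype ι] {G : ι → Type*} [∀ i, Group (G i)]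
    [∀ i, Finite (G i)] (f : ∀ i, G i) :
    orderOf f = Finset.univ.lcm fun i => orderOf (f i) := by
  refine Nat.dvd_antisymm ?_ ?_
  · rw [orderOf_dvd_iff_pow_eq_one]
    funext i
    rw [Pi.pow_apply, Pi.one_apply, ← orderOf_dvd_iff_pow_eq_one]
    exact Finset.dvd_lcm (Finset.mem_univ i)
  · refine Finset.lcm_dvd fun i _ => ?_
    rw [orderOf_dvd_iff_pow_eq_one, ← Pi.pow_apply, pow_orderOf_eq_one, Pi.one_apply]

lemma myFactorization_finset_lcm {ι : Type*} (s : Finset ι) (f : ι → ℕ)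
    (hf : ∀ i ∈ s, f i ≠ 0) (q : ℕ) :
    (s.lcm f).factorization q = s.sup fun i => (f i).factorization q := by
  classical
  induction s using Finset.induction_on with
  | empty => simp
  | insert j s hx ih =>
    have hj : f j ≠ 0 := hf j (Finset.mem_insert_self j s)
    have hs : ∀ i ∈ s, f i ≠ 0 := fun i hi => hf i (Finset.mem_insert_of_mem hi)
    have hlcm : s.lcm f ≠ 0 := by
      intro h0
      rw [Finset.lcm_eq_zero_iff] at h0
      obtain ⟨i, hi, h0⟩ := h0
      exact hs i hi h0
    rw [Finset.lcm_insert, Finset.sup_insert, ← ih hs, lcm_eq_nat_lcm,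
      Nat.factorization_lcm hj hlcm, Finsupp.sup_apply]

lemma myPowResidue_iff {G : Type*} [Group G] [Fintype G] [IsCyclic G] (q : ℕ)
    (hqd : q ∣ Fintype.card G) (x : G) :
    (∃ y : G, y ^ q = x) ↔ x ^ (Fintype.card G / q) = 1 := by
  have hq0 : 0 < Fintype.card G := Fintype.card_pos
  constructor
  · rintro ⟨y, rfl⟩
    rw [← pow_mul, Nat.mul_div_cancel' hqd, pow_card_eq_one]
  · intro hx
    obtain ⟨g, hg⟩ := IsCyclic.exists_generator (α := G)
    obtain ⟨k, hk⟩ := (mem_powers_iff_mem_zpowers (x := g)).mpr (hg x)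
    have hog : orderOf g = Fintype.card G := by
      rw [orderOf_eq_card_of_forall_mem_zpowers hg, Nat.card_eq_fintype_card]
    have hq : q ≠ 0 := by rintro rfl; simp [Nat.eq_zero_of_zero_dvd hqd] at hq0
    have hd : 0 < Fintype.card G / q := Nat.div_pos (Nat.le_of_dvd hq0 hqd) (Nat.pos_of_ne_zero hq)
    simp only at hk
    rw [← hk, ← pow_mul, ← orderOf_dvd_iff_pow_eq_one, hog] at hx
    have hcard : Fintype.card G = q * (Fintype.card G / q) := (Nat.mul_div_cancel' hqd).symm
    have hx2 : q * (Fintype.card G / q) ∣ k * (Fintype.card G / q) := by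
      rw [← hcard]; exact hx
    have hqk : q ∣ k := (Nat.mul_dvd_mul_iff_right hd).mp hx2
    obtain ⟨t, rfl⟩ := hqk
    exact ⟨g ^ t, by rw [← pow_mul, mul_comm t q, hk]⟩

lemma myDvd_div_prime_iff {q m n : ℕ} (hq : q.Prime) (hqn : q ∣ n) (hmn : m ∣ n)
    (hn : n ≠ 0) : m ∣ n / q ↔ m.factorization q < n.factorization q := by
  have hm : m ≠ 0 := fun h => hn (Nat.eq_zero_of_zero_dvd (h ▸ hmn))
  have hq0 : q ≠ 0 := hq.ne_zero
  have hnq : n / q ≠ 0 := (Nat.div_pos (Nat.le_of_dvd (Nat.pos_of_ne_zero hn) hqn)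
    hq.pos).ne'
  have hdiv : (n / q).factorization = n.factorization - q.factorization :=
    Nat.factorization_div hqn
  have hself : q.factorization = Finsupp.single q 1 := hq.factorization
  have hnfq : 1 ≤ n.factorization q := hq.factorization_pos_of_dvd hn hqn
  constructor
  · intro h
    have := (Nat.factorization_le_iff_dvd hm hnq).mpr h q
    rw [hdiv, Finsupp.tsub_apply, hself, Finsupp.single_apply, if_pos rfl] at this
    omega
  · intro h
    rw [← Nat.factorization_le_iff_dvd hm hnq]
    intro r
    rw [hdiv, Finsupp.tsub_apply, hself, Finsupp.single_apply]
    rcases eq_or_ne q r with rfl | hr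
    · rw [if_pos rfl]; omega
    · rw [if_neg hr]
      have := (Nat.factorization_le_iff_dvd hm hn).mpr hmn r
      omega

theorem generalized_primitive_root_characterization (ℓ : ℕ) (hℓ : 0 < ℓ)
    (p : Fin ℓ → ℕ) (hp : ∀ i, (p i).Prime) (hinj : Function.Injective p)
    (a : ℤ) (ha : IsCoprime a ((∏ i, p i : ℕ) : ℤ)) :
    orderOf (a : ZMod (∏ i, p i)) = Monoid.exponent (ZMod (∏ i, p i))ˣ ↔
      ∀ q : ℕ, q.Prime → q ∣ Monoid.exponent (ZMod (∏ i, p i))ˣ →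
        ∃ i : Fin ℓ, (p i - 1).factorization q =
            (Monoid.exponent (ZMod (∏ i, p i))ˣ).factorization q ∧
          ¬ ∃ b : ℤ, ((p i : ℤ)) ∣ b ^ q - a := by
  classical
  set N := ∏ i, p i with hNdef
  haveI hfact : ∀ i, Fact (p i).Prime := fun i => ⟨hp i⟩
  have hN0 : N ≠ 0 := Finset.prod_ne_zero_iff.mpr fun i _ => (hp i).ne_zero
  haveI : NeZero N := ⟨hN0⟩
  -- pairwise coprime
  have hcop : Pairwise (Function.onFun Nat.Coprime p) := fun i j hij =>
    (Nat.coprime_primes (hp i) (hp j)).mpr fun h => hij (hinj h)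
  -- the unit represented by a
  obtain ⟨x, y, hxy⟩ := ha
  have hux : (x : ZMod N) * (a : ZMod N) = 1 := by
    have : ((x * a + y * N : ℤ) : ZMod N) = 1 := by rw [hxy]; norm_cast
    push_cast at this
    rwa [ZMod.natCast_self, mul_zero, add_zero] at this
  have hua : IsUnit (a : ZMod N) := IsUnit.of_mul_eq_one (x : ZMod N) (by rw [mul_comm]; exact hux)
  set u : (ZMod N)ˣ := hua.unit with hu
  have hucoe : (u : ZMod N) = (a : ZMod N) := hua.unit_spec
  -- CRT
  set φ : ZMod N ≃+* ∀ i, ZMod (p i) := ZMod.prodEquivPi p hcop with hφ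
  set ψ : (ZMod N)ˣ ≃* ∀ i, (ZMod (p i))ˣ :=
    (Units.mapEquiv φ.toMulEquiv).trans myPiUnits with hψ
  -- the components
  have hcomp : ∀ i, ((ψ u i : ZMod (p i))) = ((a : ℤ) : ZMod (p i)) := by
    intro i
    have : (ψ u i : ZMod (p i)) = (φ (u : ZMod N)) i := rfl
    rw [this, hucoe]
    exact map_intCast ((Pi.evalRingHom (fun i => ZMod (p i)) i).comp (φ : ZMod N →+* _)) a
  set e := Monoid.exponent (ZMod N)ˣ with he
  have he0 : e ≠ 0 := Monoid.exponent_ne_zero_of_finite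
  -- exponent as lcm
  have hexp : e = Finset.univ.lcm fun i => p i - 1 := by
    rw [he, Monoid.exponent_eq_of_mulEquiv ψ, Monoid.exponent_pi]
    congr 1
    funext i
    rw [IsCyclic.exponent_eq_card, Nat.card_eq_fintype_card, ZMod.card_units_eq_totient,
      Nat.totient_prime (hp i)]
  have hp1 : ∀ i : Fin ℓ, p i - 1 ≠ 0 := fun i => by
    have := (hp i).two_le; omega
  -- order of u as lcm
  have hordu : orderOf u = Finset.univ.lcm fun i => orderOf (ψ u i) := by
    rw [← orderOf_injective ψ.toMonoidHom ψ.injective u]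
    exact myOrderOf_pi _
  have hordpos : ∀ i : Fin ℓ, orderOf (ψ u i) ≠ 0 := fun i => (orderOf_pos _).ne'
  have horddvd : ∀ i : Fin ℓ, orderOf (ψ u i) ∣ p i - 1 := fun i => by
    have := orderOf_dvd_card (x := ψ u i)
    rwa [ZMod.card_units_eq_totient, Nat.totient_prime (hp i)] at this
  -- translate order statement
  have hmain : orderOf (a : ZMod N) = orderOf u := by rw [← hucoe, orderOf_units]
  rw [hmain]
  have hudvd : orderOf u ∣ e := Monoid.order_dvd_exponent u
  have hord0 : orderOf u ≠ 0 := (orderOf_pos _).ne'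
  -- reduce to factorization inequality at primes dividing e
  have step1 : orderOf u = e ↔ ∀ q : ℕ, q.Prime → q ∣ e →
      e.factorization q ≤ (orderOf u).factorization q := by
    constructor
    · intro h q _ _; rw [h]
    · intro h
      refine Nat.dvd_antisymm hudvd ((Nat.factorization_le_iff_dvd he0 hord0).mp ?_)
      intro q
      by_cases hq : q.Prime
      · by_cases hqe : q ∣ e
        · exact h q hq hqe
        · simp [Nat.factorization_eq_zero_of_not_dvd hqe]
      · simp [Nat.factorization_eq_zero_of_not_prime _ hq]
  rw [step1]
  refine forall_congr' fun q => forall_congr' fun hq => forall_congr' fun hqe => ?_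
  -- now q is a prime dividing e
  have hefq : 0 < e.factorization q := hq.factorization_pos_of_dvd he0 hqe
  have hordfact : (orderOf u).factorization q =
      Finset.univ.sup fun i => (orderOf (ψ u i)).factorization q := by
    rw [hordu, myFactorization_finset_lcm _ _ (fun i _ => hordpos i)]
  have hefact : e.factorization q =
      Finset.univ.sup fun i => (p i - 1).factorization q := by
    rw [hexp, myFactorization_finset_lcm _ _ (fun i _ => hp1 i)]
  have hle : e.factorization q ≤ (orderOf u).factorization q ↔
      ∃ i : Fin ℓ, e.factorization q ≤ (orderOf (ψ u i)).factorization q := by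
    rw [hordfact, Finset.le_sup_iff hefq]
    simp
  rw [hle]
  refine exists_congr fun i => ?_
  have hple : (p i - 1).factorization q ≤ e.factorization q := by
    rw [hefact]
    exact Finset.le_sup (f := fun i => (p i - 1).factorization q) (Finset.mem_univ i)
  have hole : (orderOf (ψ u i)).factorization q ≤ (p i - 1).factorization q :=
    (Nat.factorization_le_iff_dvd (hordpos i) (hp1 i)).mpr (horddvd i) q
  -- residue criterion (valid when q ∣ p i - 1)
  have hres : q ∣ p i - 1 → ((∃ b : ℤ, ((p i : ℤ)) ∣ b ^ q - a) ↔
      (orderOf (ψ u i)).factorization q < (p i - 1).factorization q) := by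
    intro hqp
    have hcard : Fintype.card (ZMod (p i))ˣ = p i - 1 := by
      rw [ZMod.card_units_eq_totient, Nat.totient_prime (hp i)]
    have h1 : (∃ b : ℤ, ((p i : ℤ)) ∣ b ^ q - a) ↔ ∃ v : (ZMod (p i))ˣ, v ^ q = ψ u i := by
      constructor
      · rintro ⟨b, hb⟩
        have hb' : ((b : ZMod (p i)) : ZMod (p i)) ^ q = ((a : ℤ) : ZMod (p i)) := by
          have := (ZMod.intCast_zmod_eq_zero_iff_dvd (b ^ q - a) (p i)).mpr hb
          push_cast at this
          linear_combination this
        have hcu : IsUnit ((b : ℤ) : ZMod (p i)) := by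
          rw [← isUnit_pow_iff (a := ((b : ℤ) : ZMod (p i))) hq.ne_zero, hb', ← hcomp i]
          exact (ψ u i).isUnit
        refine ⟨hcu.unit, Units.ext ?_⟩
        rw [Units.val_pow_eq_pow_val, hcu.unit_spec, hb', ← hcomp i]
      · rintro ⟨v, hv⟩
        refine ⟨(ZMod.cast (v : ZMod (p i)) : ℤ), ?_⟩
        rw [← ZMod.intCast_zmod_eq_zero_iff_dvd]
        push_cast
        have : ((v : ZMod (p i))) ^ q = ((a : ℤ) : ZMod (p i)) := by
          rw [← Units.val_pow_eq_pow_val, hv, hcomp i]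
        rw [this]
        ring
    rw [h1]
    rw [myPowResidue_iff q (hcard ▸ hqp) (ψ u i), ← orderOf_dvd_iff_pow_eq_one, hcard]
    exact myDvd_div_prime_iff hq hqp (horddvd i) (hp1 i)
  constructor
  · intro h
    have heq1 : (p i - 1).factorization q = e.factorization q :=
      le_antisymm hple (h.trans hole)
    have hqp : q ∣ p i - 1 := Nat.dvd_of_factorization_pos (by omega)
    refine ⟨heq1, fun hb => ?_⟩
    have := (hres hqp).mp hb
    omega
  · rintro ⟨heq1, hnr⟩
    have hqp : q ∣ p i - 1 := Nat.dvd_of_factorization_pos (by omega)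
    have := (hres hqp).not.mp hnr
    omega
end

section
/- Let $\alpha$ be a positive integer and $\beta$ a squarefree positive integer. Then $\sum_{d \mid \beta} \frac{\mu(d)}{\varphi(\alpha d)} = \frac{1}{\varphi(\alpha)} \prod_{\substack{p \mid \beta \\ p \mid \alpha}} \left(1 - \frac{1}{p}\right) \prod_{\substack{p \mid \beta \\ p \nmid \alpha}} \left(1 - \frac{1}{p-1}\right).$ -/
open Finset ArithmeticFunction

private lemma totient_mul_prod (α : ℕ) (hα : 0 < α) :
    ∀ t : Finset ℕ, (∀ p ∈ t, Nat.Prime p) →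
      Nat.totient (α * ∏ p ∈ t, p) =
        Nat.totient α * ∏ p ∈ t, (if p ∣ α then p else p - 1) := by
  intro t
  induction t using Finset.induction_on with
  | empty => simp
  | @insert q t hq ih =>
    intro hprime
    have hqp : Nat.Prime q := hprime q (Finset.mem_insert_self _ _)
    have ht : ∀ p ∈ t, Nat.Prime p := fun p hp => hprime p (Finset.mem_insert_of_mem hp)
    have hqt : ¬ q ∣ ∏ p ∈ t, p := by
      intro h
      obtain ⟨p, hp, hdvd⟩ := (Prime.dvd_finset_prod_iff hqp.prime _root_.id).mp h
      exact hq ((Nat.prime_dvd_prime_iff_eq hqp (ht p hp)).mp hdvd ▸ hp)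
    rw [Finset.prod_insert hq, Finset.prod_insert hq, ← mul_assoc, mul_comm α q, mul_assoc]
    by_cases hdvd : q ∣ α
    · rw [Nat.totient_mul_of_prime_of_dvd hqp (hdvd.mul_right _), ih ht, if_pos hdvd]
      ring
    · have hcop : Nat.Coprime q (α * ∏ p ∈ t, p) :=
        Nat.Coprime.mul_right (hqp.coprime_iff_not_dvd.mpr hdvd)
          (hqp.coprime_iff_not_dvd.mpr hqt)
      rw [Nat.totient_mul hcop, Nat.totient_prime hqp, ih ht, if_neg hdvd]
      ring

theorem moebius_totient_divisor_sum (α β : ℕ) (hα : 0 < α) (hβ : 0 < β)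
    (hsq : Squarefree β) :
    ∑ d ∈ β.divisors, (ArithmeticFunction.moebius d : ℚ) / (Nat.totient (α * d)) =
      (1 / Nat.totient α) *
        (∏ p ∈ β.primeFactors.filter (fun p => p ∣ α), (1 - 1 / (p : ℚ))) *
        (∏ p ∈ β.primeFactors.filter (fun p => ¬ p ∣ α), (1 - 1 / ((p : ℚ) - 1))) := by
  classical
  have hα0 : (Nat.totient α : ℚ) ≠ 0 := Nat.cast_ne_zero.mpr (Nat.totient_pos.mpr hα).ne'
  set g : ℕ → ℚ := fun p => if p ∣ α then (p : ℚ) else (p : ℚ) - 1 with hg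
  rw [← Nat.divisors_filter_squarefree_of_squarefree hsq,
    Nat.sum_divisors_filter_squarefree hβ.ne', Nat.factors_eq, List.toFinset_coe, Nat.toFinset_factors]
  have step : ∀ t ∈ β.primeFactors.powerset,
      ((moebius (t.val.prod) : ℚ)) / (Nat.totient (α * t.val.prod)) =
        (1 / Nat.totient α) * ∏ p ∈ t, (-1 / g p) := by
    intro t htmem
    have htsub : t ⊆ β.primeFactors := Finset.mem_powerset.mp htmem
    have htp : ∀ p ∈ t, Nat.Prime p := fun p hp => Nat.prime_of_mem_primeFactors (htsub hp)
    have hprod : t.val.prod = ∏ p ∈ t, p := by rw [Finset.prod_val]; rfl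
    rw [hprod, totient_mul_prod α hα t htp,
      ArithmeticFunction.IsMultiplicative.map_prod_of_subset_primeFactors
        ArithmeticFunction.isMultiplicative_moebius β t htsub]
    have hμ : ((∏ p ∈ t, moebius p : ℤ) : ℚ) = ∏ p ∈ t, (-1 : ℚ) := by
      push_cast
      exact Finset.prod_congr rfl fun p hp => by
        rw [ArithmeticFunction.moebius_apply_prime (htp p hp)]; norm_num
    have hφ : ((Nat.totient α * ∏ p ∈ t, (if p ∣ α then p else p - 1) : ℕ) : ℚ) =
        (Nat.totient α : ℚ) * ∏ p ∈ t, g p := by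
      push_cast
      congr 1
      exact Finset.prod_congr rfl fun p hp => by
        by_cases h : p ∣ α
        · simp [hg, h]
        · simp [hg, h, Nat.cast_pred (htp p hp).pos]
    rw [hμ, hφ, div_mul_eq_div_div_swap, ← Finset.prod_div_distrib, div_eq_mul_one_div, mul_comm]
  rw [Finset.sum_congr rfl step, ← Finset.mul_sum]
  have hsum : ∑ t ∈ β.primeFactors.powerset, ∏ p ∈ t, (-1 / g p) =
      ∏ p ∈ β.primeFactors, (-1 / g p + 1) := by
    rw [Finset.prod_add]
    simp
  rw [hsum, ← Finset.prod_filter_mul_prod_filter_not β.primeFactors (· ∣ α), ← mul_assoc]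
  congr 1
  · congr 1
    refine Finset.prod_congr rfl fun p hp => ?_
    have : p ∣ α := (Finset.mem_filter.mp hp).2
    simp [hg, this]
    ring
  · refine Finset.prod_congr rfl fun p hp => ?_
    have : ¬ p ∣ α := (Finset.mem_filter.mp hp).2
    simp [hg, this]
    ring
end

section
/- For any integer $\ell \geq 1$ and any real $x$ large enough, the number of integers $n \le x$ of the form $n = p_1 \cdots p_\ell$ with primes $p_1 < \cdots < p_\ell$ such that $p_1 \le (\log x)^{64}$ is $O\left(\frac{x}{\log x} (\log\log x)^{\ell - 2} \log\log\log x\right)$. -/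
open Finset Real

namespace CSLPF

/-- primes up to `X` -/
def Pfin (X : ℕ) : Finset ℕ := (Finset.range (X+1)).filter Nat.Prime

lemma mem_Pfin {p X : ℕ} : p ∈ Pfin X ↔ p.Prime ∧ p ≤ X := by
  simp [Pfin, Finset.mem_filter, Finset.mem_range, Nat.lt_succ_iff, and_comm]

lemma sum_log_Pfin (X : ℕ) : ∑ p ∈ Pfin X, Real.log p ≤ X * Real.log 4 := by
  have h1 : Real.log (primorial X) = ∑ p ∈ Pfin X, Real.log p := by
    rw [primorial, Pfin]
    push_cast
    rw [Real.log_prod]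
    intro p hp
    simp only [Finset.mem_filter, Finset.mem_range] at hp
    exact_mod_cast hp.2.ne_zero
  have h2 : Real.log (primorial X) ≤ Real.log ((4:ℝ)^X) := by
    apply Real.log_le_log (by exact_mod_cast primorial_pos X)
    exact_mod_cast primorial_le_4_pow X
  rw [h1, Real.log_pow] at h2
  exact_mod_cast h2
  

lemma log_four_lt : Real.log 4 < 1.4 := by
  have h2 : Real.log 2 < 0.6931471808 := Real.log_two_lt_d9
  have : (4:ℝ) = 2^2 := by norm_num
  rw [this, Real.log_pow]
  push_cast
  nlinarith

lemma card_Pfin_mul_log {X : ℕ} (hX : 2 ≤ X) :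
    ((Pfin X).card : ℝ) * Real.log X ≤ 6 * X := by
  have hX0 : (0:ℝ) < X := by positivity
  have hX1 : (1:ℝ) ≤ X := by exact_mod_cast hX.trans' (by norm_num)
  have hlogX : 0 < Real.log X := Real.log_pos (by exact_mod_cast hX)
  classical
  set s₁ := (Pfin X).filter (fun p : ℕ => (p:ℝ) ≤ Real.sqrt X) with hs₁
  set s₂ := (Pfin X).filter (fun p : ℕ => ¬ (p:ℝ) ≤ Real.sqrt X) with hs₂
  have hcard : (Pfin X).card = s₁.card + s₂.card := by
    rw [hs₁, hs₂]
    exact (Finset.card_filter_add_card_filter_not (fun p : ℕ => (p:ℝ) ≤ Real.sqrt X)).symm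
  -- bound on s₁
  have hsqrt_pos : (0:ℝ) ≤ Real.sqrt X := Real.sqrt_nonneg _
  have h1 : (s₁.card : ℝ) ≤ Real.sqrt X := by
    have hsub : s₁ ⊆ Finset.Icc 2 ⌊Real.sqrt X⌋₊ := by
      intro p hp
      simp only [hs₁, Finset.mem_filter, mem_Pfin] at hp
      exact Finset.mem_Icc.mpr ⟨hp.1.1.two_le, Nat.le_floor hp.2⟩
    have := Finset.card_le_card hsub
    have h2 : (Finset.Icc 2 ⌊Real.sqrt X⌋₊).card ≤ ⌊Real.sqrt X⌋₊ := by
      rw [Nat.card_Icc]; omega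
    calc (s₁.card : ℝ) ≤ (⌊Real.sqrt X⌋₊ : ℝ) := by exact_mod_cast this.trans h2
      _ ≤ Real.sqrt X := Nat.floor_le hsqrt_pos
  have hlog_sqrt : Real.log X ≤ 2 * Real.sqrt X := by
    have h := Real.log_le_sub_one_of_pos (x := Real.sqrt X) (Real.sqrt_pos.mpr hX0)
    have h2 := Real.log_sqrt (x := (X:ℝ)) hX0.le
    nlinarith [Real.sqrt_nonneg (X:ℝ)]
  have hb1 : (s₁.card : ℝ) * Real.log X ≤ 2 * X := by
    have := mul_le_mul h1 hlog_sqrt (Real.log_nonneg ?_) hsqrt_pos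
    · calc (s₁.card:ℝ) * Real.log X ≤ Real.sqrt X * (2 * Real.sqrt X) := this
        _ = 2 * (Real.sqrt X * Real.sqrt X) := by ring
        _ = 2 * X := by rw [Real.mul_self_sqrt hX0.le]
    · exact hX1
  -- bound on s₂
  have hb2 : (s₂.card : ℝ) * Real.log X ≤ 2 * (X * Real.log 4) := by
    have hhalf : ∀ q ∈ s₂, Real.log X / 2 ≤ Real.log q := by
      intro q hq
      simp only [hs₂, Finset.mem_filter, mem_Pfin, not_le] at hq
      rw [← Real.log_sqrt hX0.le]
      exact Real.log_le_log (Real.sqrt_pos.mpr hX0) hq.2.le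
    have hsum : (s₂.card : ℝ) * (Real.log X / 2) ≤ ∑ q ∈ s₂, Real.log q := by
      simpa using Finset.card_nsmul_le_sum s₂ (fun q => Real.log q) (Real.log X / 2) hhalf
    have hsub : ∑ q ∈ s₂, Real.log q ≤ ∑ q ∈ Pfin X, Real.log q := by
      apply Finset.sum_le_sum_of_subset_of_nonneg (Finset.filter_subset _ _)
      intro q hq _
      rcases mem_Pfin.mp hq with ⟨hq1, _⟩
      exact Real.log_nonneg (by exact_mod_cast hq1.one_lt.le)
    have := hsum.trans (hsub.trans (sum_log_Pfin X))
    linarith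
  have hlog4 : Real.log 4 < 1.4 := log_four_lt
  calc ((Pfin X).card : ℝ) * Real.log X = (s₁.card : ℝ) * Real.log X + (s₂.card:ℝ) * Real.log X := by
        rw [hcard]; push_cast; ring
    _ ≤ 2 * X + 2 * (X * Real.log 4) := by linarith
    _ ≤ 6 * X := by nlinarith


lemma sum_inv_Pfin_nonneg (X : ℕ) : (0:ℝ) ≤ ∑ p ∈ Pfin X, (1/p : ℝ) := by
  apply Finset.sum_nonneg; intro p _; positivity

lemma mertens_pow (m : ℕ) :
    ∑ p ∈ Pfin (2^(m+1)), (1/p : ℝ) ≤ 18 * (harmonic (m+1) : ℝ) := by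
  induction m with
  | zero =>
    have : Pfin 2 = {2} := by decide
    rw [pow_one, this]
    simp [harmonic_succ, harmonic_zero]
    norm_num
  | succ m ih =>
    have hsub : Pfin (2^(m+1)) ⊆ Pfin (2^(m+2)) := by
      intro p hp
      rcases mem_Pfin.mp hp with ⟨h1, h2⟩
      exact mem_Pfin.mpr ⟨h1, h2.trans (Nat.pow_le_pow_right (by norm_num) (by omega))⟩
    have hsplit : ∑ p ∈ Pfin (2^(m+2)), (1/p:ℝ)
        = ∑ p ∈ Pfin (2^(m+2)) \ Pfin (2^(m+1)), (1/p:ℝ) + ∑ p ∈ Pfin (2^(m+1)), (1/p:ℝ) :=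
      (Finset.sum_sdiff hsub).symm
    -- bound the sdiff sum
    have hcard : ((Pfin (2^(m+2))).card : ℝ) * Real.log (2^(m+2)) ≤ 6 * 2^(m+2) := by
      have := card_Pfin_mul_log (X := 2^(m+2)) (by
        calc 2 = 2^1 := (pow_one 2).symm
          _ ≤ 2^(m+2) := Nat.pow_le_pow_right (by norm_num) (by omega))
      push_cast at this ⊢
      convert this using 3
    have hlog2 : (0.6931471803 : ℝ) < Real.log 2 := Real.log_two_gt_d9
    have hlogpow : Real.log ((2:ℝ)^(m+2)) = (m+2) * Real.log 2 := by
      rw [Real.log_pow]; push_cast; ring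
    have hcardb : ((Pfin (2^(m+2))).card : ℝ) ≤ 6 * 2^(m+2) / ((m+2) * Real.log 2) := by
      rw [le_div_iff₀ (by positivity)]
      rw [hlogpow] at hcard
      exact_mod_cast hcard
    have hterm : ∀ p ∈ Pfin (2^(m+2)) \ Pfin (2^(m+1)), (1/p:ℝ) ≤ 1/(2^(m+1)) := by
      intro p hp
      rcases Finset.mem_sdiff.mp hp with ⟨hp1, hp2⟩
      rcases mem_Pfin.mp hp1 with ⟨hpp, hple⟩
      have : ¬ (p ≤ 2^(m+1)) := fun h => hp2 (mem_Pfin.mpr ⟨hpp, h⟩)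
      push_neg at this
      apply one_div_le_one_div_of_le (by positivity)
      exact_mod_cast this.le
    have hsdiff : ∑ p ∈ Pfin (2^(m+2)) \ Pfin (2^(m+1)), (1/p:ℝ) ≤ 18 / (m+2) := by
      calc ∑ p ∈ Pfin (2^(m+2)) \ Pfin (2^(m+1)), (1/p:ℝ)
          ≤ ∑ _p ∈ Pfin (2^(m+2)) \ Pfin (2^(m+1)), (1/(2^(m+1)):ℝ) :=
            Finset.sum_le_sum hterm
        _ = ((Pfin (2^(m+2)) \ Pfin (2^(m+1))).card : ℝ) * (1/(2^(m+1))) := by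
            rw [Finset.sum_const, nsmul_eq_mul]
        _ ≤ ((Pfin (2^(m+2))).card : ℝ) * (1/(2^(m+1))) := by
            apply mul_le_mul_of_nonneg_right _ (by positivity)
            exact_mod_cast Finset.card_le_card (Finset.sdiff_subset)
        _ ≤ (6 * 2^(m+2) / ((m+2) * Real.log 2)) * (1/(2^(m+1))) := by
            apply mul_le_mul_of_nonneg_right hcardb (by positivity)
        _ = 12 / ((m+2) * Real.log 2) := by
            field_simp
            ring
        _ ≤ 18 / (m+2) := by
            rw [div_le_div_iff₀ (by positivity) (by positivity)]
            nlinarith [hlog2]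
    have hharm : (harmonic (m+2) : ℝ) = (harmonic (m+1) : ℝ) + 1/(m+2) := by
      have := harmonic_succ (m+1)
      push_cast [this]
      ring
    rw [hsplit, hharm]
    have hdd : (18:ℝ)/((m:ℝ)+2) = 18 * (1/((m:ℝ)+2)) := by ring
    push_cast
    push_cast at hsdiff ih hdd
    linarith

lemma mertens {t : ℝ} (ht : 16 ≤ t) :
    ∑ p ∈ Pfin ⌊t⌋₊, (1/p:ℝ) ≤ 60 * Real.log (Real.log t) := by
  have ht0 : (0:ℝ) < t := by linarith
  have hlog2 : (0.6931471803 : ℝ) < Real.log 2 := Real.log_two_gt_d9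
  have hlog2' : Real.log 2 < 0.6931471808 := Real.log_two_lt_d9
  have hlogt : 2.772 ≤ Real.log t := by
    have : Real.log 16 ≤ Real.log t := Real.log_le_log (by norm_num) ht
    have h16 : Real.log 16 = 4 * Real.log 2 := by
      rw [show (16:ℝ) = 2^4 by norm_num, Real.log_pow]; push_cast; ring
    nlinarith
  have hloglogt : 1 ≤ Real.log (Real.log t) := by
    have he : Real.exp 1 < 2.7182818286 := Real.exp_one_lt_d9
    calc (1:ℝ) = Real.log (Real.exp 1) := (Real.log_exp 1).symm
      _ ≤ Real.log (Real.log t) := Real.log_le_log (Real.exp_pos 1) (by nlinarith)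
  set m := Nat.log 2 ⌊t⌋₊ with hm
  have hfl : 16 ≤ ⌊t⌋₊ := Nat.le_floor (by exact_mod_cast ht)
  have hlt : ⌊t⌋₊ < 2^(m+1) := Nat.lt_pow_succ_log_self (by norm_num) _
  have hsub : Pfin ⌊t⌋₊ ⊆ Pfin (2^(m+1)) := by
    intro p hp
    rcases mem_Pfin.mp hp with ⟨h1, h2⟩
    exact mem_Pfin.mpr ⟨h1, by omega⟩
  have h1 : ∑ p ∈ Pfin ⌊t⌋₊, (1/p:ℝ) ≤ ∑ p ∈ Pfin (2^(m+1)), (1/p:ℝ) := by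
    apply Finset.sum_le_sum_of_subset_of_nonneg hsub
    intro p _ _; positivity
  have h2 := mertens_pow m
  have h3 : (harmonic (m+1) : ℝ) ≤ 1 + Real.log (m+1) := by
    have := harmonic_le_one_add_log (m+1)
    push_cast at this ⊢
    convert this using 2
  -- bound m+1 ≤ 2 log t
  have hmle : 2^m ≤ ⌊t⌋₊ := Nat.pow_log_le_self 2 (by omega)
  have hmle' : (2:ℝ)^m ≤ t := by
    calc (2:ℝ)^m = ((2^m : ℕ) : ℝ) := by push_cast; ring
      _ ≤ (⌊t⌋₊ : ℝ) := by exact_mod_cast hmle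
      _ ≤ t := Nat.floor_le ht0.le
  have hmlog : (m:ℝ) * Real.log 2 ≤ Real.log t := by
    calc (m:ℝ) * Real.log 2 = Real.log ((2:ℝ)^m) := by rw [Real.log_pow]
      _ ≤ Real.log t := Real.log_le_log (by positivity) hmle'
  have hm1 : (m:ℝ) + 1 ≤ 2 * Real.log t := by nlinarith
  have h4 : Real.log ((m:ℝ)+1) ≤ Real.log 2 + Real.log (Real.log t) := by
    calc Real.log ((m:ℝ)+1) ≤ Real.log (2 * Real.log t) :=
          Real.log_le_log (by positivity) hm1
      _ = Real.log 2 + Real.log (Real.log t) := Real.log_mul (by norm_num) (by nlinarith)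
  have : ∑ p ∈ Pfin ⌊t⌋₊, (1/p:ℝ) ≤ 18 * (1 + Real.log 2 + Real.log (Real.log t)) := by
    push_cast at h3
    nlinarith [h1, h2, h3, h4]
  nlinarith [this]


/-- squarefree numbers in `[1,X]` with exactly `k` prime factors -/
def Rfin (k X : ℕ) : Finset ℕ :=
  (Finset.Icc 1 X).filter (fun r => Squarefree r ∧ r.primeFactors.card = k)

lemma mem_Rfin {r k X : ℕ} :
    r ∈ Rfin k X ↔ (1 ≤ r ∧ r ≤ X) ∧ Squarefree r ∧ r.primeFactors.card = k := by
  simp [Rfin, Finset.mem_filter, Finset.mem_Icc]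

lemma sum_Rfin_le (k X : ℕ) :
    ∑ r ∈ Rfin k X, (1/r:ℝ) ≤ (∑ p ∈ Pfin X, (1/p:ℝ))^k := by
  induction k with
  | zero =>
    have hsub : Rfin 0 X ⊆ {1} := by
      intro r hr
      rcases mem_Rfin.mp hr with ⟨⟨h1, _⟩, h2, h3⟩
      have : r = 1 := by
        have := Nat.prod_primeFactors_of_squarefree h2
        rw [Finset.card_eq_zero.mp h3] at this
        simpa using this.symm
      simp [this]
    calc ∑ r ∈ Rfin 0 X, (1/r:ℝ) ≤ ∑ r ∈ ({1} : Finset ℕ), (1/r:ℝ) := by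
          apply Finset.sum_le_sum_of_subset_of_nonneg hsub
          intro i _ _; positivity
      _ = 1 := by norm_num
      _ = _ := by norm_num
  | succ k ih =>
    classical
    set f : ℕ → ℕ × ℕ := fun r => (r.minFac, r / r.minFac) with hf
    -- basic facts about members
    have key : ∀ r ∈ Rfin (k+1) X, r.minFac.Prime ∧ r = r.minFac * (r / r.minFac) ∧
        (r / r.minFac) ∈ Rfin k X ∧ r.minFac ∈ Pfin X := by
      intro r hr
      rcases mem_Rfin.mp hr with ⟨⟨h1, h2⟩, hsf, hcard⟩
      have hne : r ≠ 1 := by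
        rintro rfl
        simp at hcard
      have hrp : r.minFac.Prime := Nat.minFac_prime hne
      have hdvd : r.minFac ∣ r := Nat.minFac_dvd r
      have heq : r = r.minFac * (r / r.minFac) := (Nat.mul_div_cancel' hdvd).symm
      have hr0 : r ≠ 0 := by omega
      have hr'0 : r / r.minFac ≠ 0 := by
        intro h
        rw [h, mul_zero] at heq
        exact hr0 heq
      have hcop : Nat.Coprime r.minFac (r / r.minFac) := by
        apply Nat.coprime_of_squarefree_mul
        rwa [← heq]
      have hsf' : Squarefree (r / r.minFac) := hsf.squarefree_of_dvd (Nat.div_dvd_of_dvd hdvd)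
      have hpf : r.primeFactors = insert r.minFac (r / r.minFac).primeFactors := by
        conv_lhs => rw [heq]
        rw [Nat.primeFactors_mul (by exact hrp.ne_zero) hr'0, Nat.Prime.primeFactors hrp]
        rfl
      have hnotmem : r.minFac ∉ (r / r.minFac).primeFactors := by
        intro hmem
        have hdvd' := Nat.dvd_of_mem_primeFactors hmem
        have hg : r.minFac ∣ Nat.gcd r.minFac (r / r.minFac) := Nat.dvd_gcd dvd_rfl hdvd'
        rw [Nat.Coprime] at hcop
        rw [hcop] at hg
        exact hrp.ne_one (Nat.eq_one_of_dvd_one hg)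
      have hcard' : (r / r.minFac).primeFactors.card = k := by
        have := hcard
        rw [hpf, Finset.card_insert_of_notMem hnotmem] at this
        omega
      refine ⟨hrp, heq, mem_Rfin.mpr ⟨⟨Nat.one_le_iff_ne_zero.mpr hr'0, le_trans (Nat.div_le_self _ _) h2⟩, hsf', hcard'⟩,
        mem_Pfin.mpr ⟨hrp, le_trans (Nat.minFac_le (by omega)) h2⟩⟩
    have hinj : ∀ r₁ ∈ Rfin (k+1) X, ∀ r₂ ∈ Rfin (k+1) X, f r₁ = f r₂ → r₁ = r₂ := by
      intro r₁ h₁ r₂ h₂ heq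
      have k₁ := (key r₁ h₁).2.1
      have k₂ := (key r₂ h₂).2.1
      rw [hf] at heq
      simp only [Prod.mk.injEq] at heq
      rw [k₁, k₂, heq.2, heq.1]
    have himg : ∀ r ∈ Rfin (k+1) X, f r ∈ (Pfin X) ×ˢ (Rfin k X) := by
      intro r hr
      rcases key r hr with ⟨_, _, h3, h4⟩
      exact Finset.mem_product.mpr ⟨h4, h3⟩
    have hstep : ∑ r ∈ Rfin (k+1) X, (1/r:ℝ)
        = ∑ z ∈ (Rfin (k+1) X).image f, (1/(z.1 * z.2 : ℕ) : ℝ) := by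
      rw [Finset.sum_image hinj]
      apply Finset.sum_congr rfl
      intro r hr
      rw [hf]
      congr 1
      exact_mod_cast congrArg (Nat.cast (R := ℝ)) (key r hr).2.1
    have hsub : (Rfin (k+1) X).image f ⊆ (Pfin X) ×ˢ (Rfin k X) := by
      intro z hz
      rcases Finset.mem_image.mp hz with ⟨r, hr, rfl⟩
      exact himg r hr
    calc ∑ r ∈ Rfin (k+1) X, (1/r:ℝ)
        = ∑ z ∈ (Rfin (k+1) X).image f, (1/(z.1 * z.2 : ℕ) : ℝ) := hstep
      _ ≤ ∑ z ∈ (Pfin X) ×ˢ (Rfin k X), (1/(z.1 * z.2 : ℕ) : ℝ) := by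
          apply Finset.sum_le_sum_of_subset_of_nonneg hsub
          intro i _ _; positivity
      _ = (∑ p ∈ Pfin X, (1/p:ℝ)) * (∑ r ∈ Rfin k X, (1/r:ℝ)) := by
          rw [Finset.sum_product]
          rw [Finset.sum_mul]
          apply Finset.sum_congr rfl
          intro p _
          rw [Finset.mul_sum]
          apply Finset.sum_congr rfl
          intro r _
          push_cast
          rw [one_div, one_div, one_div, mul_inv]
      _ ≤ (∑ p ∈ Pfin X, (1/p:ℝ)) * (∑ p ∈ Pfin X, (1/p:ℝ))^k := by
          apply mul_le_mul_of_nonneg_left ih (sum_inv_Pfin_nonneg X)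
      _ = (∑ p ∈ Pfin X, (1/p:ℝ))^(k+1) := by ring


lemma squarefree_prod_primes {s : Finset ℕ} (hs : ∀ p ∈ s, p.Prime) :
    Squarefree (∏ p ∈ s, p) := by
  classical
  induction s using Finset.induction_on with
  | empty => simpa using squarefree_one
  | @insert a t ha ih =>
    rw [Finset.prod_insert ha]
    have hap : a.Prime := hs a (Finset.mem_insert_self a t)
    have hcop : Nat.Coprime a (∏ p ∈ t, p) := by
      apply Nat.Coprime.prod_right
      intro p hp
      have hpp : p.Prime := hs p (Finset.mem_insert_of_mem hp)
      exact (Nat.coprime_primes hap hpp).mpr (fun h => ha (h ▸ hp))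
    rw [Nat.squarefree_mul_iff]
    exact ⟨hcop, hap.squarefree, ih (fun p hp => hs p (Finset.mem_insert_of_mem hp))⟩

lemma ev_logpow_le (k : ℕ) : ∀ᶠ x : ℝ in Filter.atTop, (Real.log x)^k ≤ x := by
  rcases Nat.eq_zero_or_pos k with rfl | hk
  · filter_upwards [Filter.eventually_ge_atTop (1:ℝ)] with x hx
    simpa using hx
  · have hlt : (0:ℝ) < (k:ℝ)⁻¹ := by positivity
    have h := (isLittleO_log_rpow_atTop hlt).bound one_pos
    filter_upwards [h, Filter.eventually_ge_atTop (1:ℝ)] with x hx hx1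
    have hx0 : (0:ℝ) ≤ x := by linarith
    have hlog0 : 0 ≤ Real.log x := Real.log_nonneg hx1
    have hrpow0 : (0:ℝ) ≤ x ^ ((k:ℝ)⁻¹) := Real.rpow_nonneg hx0 _
    rw [Real.norm_eq_abs, Real.norm_eq_abs, abs_of_nonneg hlog0, abs_of_nonneg hrpow0,
      one_mul] at hx
    calc (Real.log x)^k ≤ (x ^ ((k:ℝ)⁻¹))^k := pow_le_pow_left₀ hlog0 hx k
      _ = x := by
        rw [← Real.rpow_natCast (x ^ ((k:ℝ)⁻¹)) k, ← Real.rpow_mul hx0]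
        rw [inv_mul_cancel₀ (by exact_mod_cast hk.ne')]
        exact Real.rpow_one x

end CSLPF

set_option maxHeartbeats 1600000 in
open CSLPF in
theorem count_small_least_prime_factor (ℓ : ℕ) (hℓ : 1 ≤ ℓ) :
    ∃ C x₀ : ℝ, 0 < C ∧ ∀ x : ℝ, x₀ ≤ x →
      (({n : ℕ | (n : ℝ) ≤ x ∧ ∃ s : Finset ℕ, s.card = ℓ ∧ (∀ p ∈ s, p.Prime) ∧
          n = ∏ p ∈ s, p ∧ ∃ p ∈ s, (p : ℝ) ≤ (Real.log x) ^ (64 : ℕ)}.ncard : ℝ)) ≤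
        C * (x / Real.log x) * (Real.log (Real.log x)) ^ ((ℓ : ℤ) - 2) *
          Real.log (Real.log (Real.log x)) := by
  classical
  have hev : ∀ᶠ x : ℝ in Filter.atTop,
      2 ≤ Real.log x ∧ 16 ≤ x ∧ 1 ≤ Real.log (Real.log x) ∧
      1 ≤ Real.log (Real.log (Real.log x)) ∧ (Real.log x)^130 ≤ x ∧ (Real.log x)^67 ≤ x := by
    have e1 : ∀ᶠ x : ℝ in Filter.atTop, 2 ≤ Real.log x :=
      Real.tendsto_log_atTop.eventually_ge_atTop 2
    have e2 : ∀ᶠ x : ℝ in Filter.atTop, (16:ℝ) ≤ x := Filter.eventually_ge_atTop 16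
    have e3 : ∀ᶠ x : ℝ in Filter.atTop, 1 ≤ Real.log (Real.log x) :=
      (Real.tendsto_log_atTop.comp Real.tendsto_log_atTop).eventually_ge_atTop 1
    have e4 : ∀ᶠ x : ℝ in Filter.atTop, 1 ≤ Real.log (Real.log (Real.log x)) :=
      ((Real.tendsto_log_atTop.comp Real.tendsto_log_atTop).comp
        Real.tendsto_log_atTop).eventually_ge_atTop 1
    filter_upwards [e1, e2, e3, e4, ev_logpow_le 130, ev_logpow_le 67] with x h1 h2 h3 h4 h5 h6
    exact ⟨h1, h2, h3, h4, h5, h6⟩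
  obtain ⟨x₀, hx₀⟩ := Filter.eventually_atTop.mp hev
  refine ⟨1 + 2000 * (ℓ:ℝ) * 60^ℓ, x₀, by positivity, ?_⟩
  intro x hx
  obtain ⟨hLog2, h16, hL2, hL3, h130, h67⟩ := hx₀ x hx
  set L := Real.log x with hLdef
  set L2 := Real.log L with hL2def
  set L3 := Real.log L2 with hL3def
  have hL0 : (0:ℝ) < L := by linarith
  have hx0 : (0:ℝ) < x := by linarith
  have hL20 : (0:ℝ) < L2 := by linarith
  have hL30 : (0:ℝ) < L3 := by linarith
  set N := ⌊x⌋₊ with hN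
  set Y := ⌊(L^64 : ℝ)⌋₊ with hY
  have hy0 : (0:ℝ) < L^64 := by positivity
  set T : Finset ℕ := (Finset.Icc 1 N).filter
      (fun n => Squarefree n ∧ n.primeFactors.card = ℓ ∧ (n.minFac : ℝ) ≤ L^64) with hT
  have hsub : {n : ℕ | (n : ℝ) ≤ x ∧ ∃ s : Finset ℕ, s.card = ℓ ∧ (∀ p ∈ s, p.Prime) ∧
      n = ∏ p ∈ s, p ∧ ∃ p ∈ s, (p : ℝ) ≤ L ^ (64 : ℕ)} ⊆ (T : Set ℕ) := by
    intro n hn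
    obtain ⟨hnx, s, hcard, hsp, hprod, p, hps, hpy⟩ := hn
    have hsf : Squarefree n := hprod ▸ squarefree_prod_primes hsp
    have hpf : n.primeFactors = s := by rw [hprod]; exact Nat.primeFactors_prod hsp
    have hn1 : 1 ≤ n := by
      rw [hprod]; exact Finset.prod_pos (fun q hq => (hsp q hq).pos)
    have hpp : p.Prime := hsp p hps
    have hpdvd : p ∣ n := hprod ▸ Finset.dvd_prod_of_mem _ hps
    have hminFac : (n.minFac : ℝ) ≤ L^64 := by
      refine le_trans ?_ hpy
      exact_mod_cast Nat.minFac_le_of_dvd hpp.two_le hpdvd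
    exact Finset.mem_coe.mpr (Finset.mem_filter.mpr
      ⟨Finset.mem_Icc.mpr ⟨hn1, Nat.le_floor hnx⟩, hsf, by rw [hpf]; exact hcard, hminFac⟩)
  have hcount : (({n : ℕ | (n : ℝ) ≤ x ∧ ∃ s : Finset ℕ, s.card = ℓ ∧ (∀ p ∈ s, p.Prime) ∧
      n = ∏ p ∈ s, p ∧ ∃ p ∈ s, (p : ℝ) ≤ L ^ (64 : ℕ)}.ncard : ℕ) : ℝ) ≤ (T.card : ℝ) := by
    have h1 := Set.ncard_le_ncard hsub T.finite_toSet
    rw [Set.ncard_coe_finset] at h1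
    exact_mod_cast h1
  refine le_trans hcount ?_
  have hC1 : (1:ℝ) ≤ 1 + 2000 * (ℓ:ℝ) * 60^ℓ := by
    have h0 : (0:ℝ) ≤ 2000 * (ℓ:ℝ) * 60^ℓ := by positivity
    linarith
  rcases eq_or_lt_of_le hℓ with hl1 | hl2
  · -- case ℓ = 1
    have hl1' : ℓ = 1 := hl1.symm
    subst hl1'
    have hTsub : T ⊆ Finset.Icc 1 Y := by
      intro n hn
      obtain ⟨hmem, hsf, hcard, hmf⟩ := Finset.mem_filter.mp hn
      obtain ⟨q, hq⟩ := Finset.card_eq_one.mp hcard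
      have hqp : q.Prime := Nat.prime_of_mem_primeFactors (hq ▸ Finset.mem_singleton_self q)
      have hnq : n = q := by
        have h2 := Nat.prod_primeFactors_of_squarefree hsf
        rw [hq] at h2
        simpa using h2.symm
      have hmfn : n.minFac = n := by rw [hnq]; exact hqp.minFac_eq
      rw [hmfn] at hmf
      exact Finset.mem_Icc.mpr ⟨(Finset.mem_Icc.mp hmem).1, Nat.le_floor hmf⟩
    have hTcard : (T.card : ℝ) ≤ L^64 := by
      have h1 : T.card ≤ Y := by
        have := Finset.card_le_card hTsub
        rwa [Nat.card_Icc, Nat.add_sub_cancel] at this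
      calc (T.card : ℝ) ≤ (Y:ℝ) := by exact_mod_cast h1
        _ ≤ L^64 := Nat.floor_le hy0.le
    have hL2L : L2 ≤ L := by
      have := Real.log_le_sub_one_of_pos hL0
      linarith
    have hyx : L^64 * (L * L2) ≤ x := by
      calc L^64 * (L * L2) ≤ L^64 * (L * L) := by
            apply mul_le_mul_of_nonneg_left _ (by positivity)
            exact mul_le_mul_of_nonneg_left hL2L hL0.le
        _ = L^66 := by ring
        _ ≤ L^67 := pow_le_pow_right₀ (by linarith) (by norm_num)
        _ ≤ x := h67
    have hfin1 : L^64 ≤ (x / L) * L2⁻¹ := by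
      have heq : (x / L) * L2⁻¹ = x / (L * L2) := by field_simp
      rw [heq, le_div_iff₀ (by positivity)]
      exact hyx
    have hzpow : L2 ^ (((1:ℕ):ℤ) - 2) = L2⁻¹ := by
      norm_num
    rw [hzpow]
    have h0 : (0:ℝ) ≤ (x/L) * L2⁻¹ := by positivity
    calc (T.card : ℝ) ≤ L^64 := hTcard
      _ ≤ (x/L) * L2⁻¹ := hfin1
      _ ≤ ((1 + 2000 * ((1:ℕ):ℝ) * 60^(1:ℕ)) * L3) * ((x/L) * L2⁻¹) := by
          apply le_mul_of_one_le_left h0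
          nlinarith
      _ = (1 + 2000 * ((1:ℕ):ℝ) * 60^(1:ℕ)) * (x/L) * L2⁻¹ * L3 := by ring
  · -- case 2 ≤ ℓ
    have hl2' : 2 ≤ ℓ := hl2
    set T₁ := T.filter (fun n : ℕ => (n:ℝ) ≤ x / L) with hT₁
    set T₂ := T.filter (fun n : ℕ => ¬ (n:ℝ) ≤ x / L) with hT₂
    have hTsplit : T.card = T₁.card + T₂.card := by
      rw [hT₁, hT₂]
      exact (Finset.card_filter_add_card_filter_not (s := T) (fun n : ℕ => (n:ℝ) ≤ x / L)).symm
    have hcardT₁ : (T₁.card : ℝ) ≤ x / L := by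
      have hsub1 : T₁ ⊆ Finset.Icc 1 ⌊x / L⌋₊ := by
        intro n hn
        obtain ⟨hnT, hnx⟩ := Finset.mem_filter.mp hn
        exact Finset.mem_Icc.mpr
          ⟨(Finset.mem_Icc.mp (Finset.mem_filter.mp hnT).1).1, Nat.le_floor hnx⟩
      have h1 : T₁.card ≤ ⌊x / L⌋₊ := by
        have := Finset.card_le_card hsub1
        rwa [Nat.card_Icc, Nat.add_sub_cancel] at this
      calc (T₁.card : ℝ) ≤ (⌊x / L⌋₊ : ℝ) := by exact_mod_cast h1
        _ ≤ x / L := Nat.floor_le (by positivity)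
    set Qf : ℕ → ℕ → Finset ℕ := fun p r =>
      (Pfin ⌊x / ((p:ℝ) * (r:ℝ))⌋₊).filter (fun q => x ≤ (q:ℝ)^(2*ℓ)) with hQf
    set qf : ℕ → ℕ := fun n => (n.primeFactors.erase n.minFac).sup id with hqf
    set rf : ℕ → ℕ := fun n => ∏ a ∈ (n.primeFactors.erase n.minFac).erase (qf n), a with hrf
    have key2 : ∀ n ∈ T₂, n = n.minFac * (qf n * rf n) ∧ n.minFac ∈ Pfin Y ∧
        rf n ∈ Rfin (ℓ-2) N ∧ qf n ∈ Qf n.minFac (rf n) := by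
      intro n hn
      obtain ⟨hnT, hnbig⟩ := Finset.mem_filter.mp hn
      obtain ⟨hnIcc, hsf, hcard, hmf⟩ := Finset.mem_filter.mp hnT
      obtain ⟨hn1, hnN⟩ := Finset.mem_Icc.mp hnIcc
      push_neg at hnbig
      have hnx : (n:ℝ) ≤ x := by
        calc (n:ℝ) ≤ (N:ℝ) := by exact_mod_cast hnN
          _ ≤ x := Nat.floor_le hx0.le
      have hn2 : n ≠ 1 := by
        rintro rfl
        simp at hcard
        omega
      have hpp : n.minFac.Prime := Nat.minFac_prime hn2
      have hn0 : n ≠ 0 := by omega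
      have hpmem : n.minFac ∈ n.primeFactors :=
        Nat.mem_primeFactors.mpr ⟨hpp, Nat.minFac_dvd n, hn0⟩
      have hcardE : (n.primeFactors.erase n.minFac).card = ℓ - 1 := by
        rw [Finset.card_erase_of_mem hpmem, hcard]
      have hEne : (n.primeFactors.erase n.minFac).Nonempty := Finset.card_pos.mp (by omega)
      obtain ⟨b, hbE, hqb⟩ := Finset.exists_mem_eq_sup (n.primeFactors.erase n.minFac) hEne id
      have hqE : qf n ∈ n.primeFactors.erase n.minFac := by
        show (n.primeFactors.erase n.minFac).sup id ∈ _
        rw [hqb]; exact hbE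
      have hqmax : ∀ a ∈ n.primeFactors.erase n.minFac, a ≤ qf n :=
        fun a ha => Finset.le_sup (f := id) ha
      have hqprime : (qf n).Prime := Nat.prime_of_mem_primeFactors (Finset.mem_of_mem_erase hqE)
      have hprodF : ∏ a ∈ n.primeFactors, a = n := Nat.prod_primeFactors_of_squarefree hsf
      have hprod1 : n.minFac * ∏ a ∈ n.primeFactors.erase n.minFac, a = n := by
        conv_rhs => rw [← hprodF]
        exact Finset.mul_prod_erase _ (fun a => a) hpmem
      have hprod2 : qf n * rf n = ∏ a ∈ n.primeFactors.erase n.minFac, a :=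
        Finset.mul_prod_erase _ (fun a => a) hqE
      have heqn : n = n.minFac * (qf n * rf n) := by rw [hprod2, hprod1]
      have hpY : n.minFac ∈ Pfin Y := mem_Pfin.mpr ⟨hpp, Nat.le_floor hmf⟩
      have hprimesR : ∀ a ∈ (n.primeFactors.erase n.minFac).erase (qf n), a.Prime := fun a ha =>
        Nat.prime_of_mem_primeFactors (Finset.mem_of_mem_erase (Finset.mem_of_mem_erase ha))
      have hrsf : Squarefree (rf n) := squarefree_prod_primes hprimesR
      have hrpf : (rf n).primeFactors = (n.primeFactors.erase n.minFac).erase (qf n) :=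
        Nat.primeFactors_prod hprimesR
      have hrcard : (rf n).primeFactors.card = ℓ - 2 := by
        rw [hrpf, Finset.card_erase_of_mem hqE, hcardE]
        omega
      have hr1 : 1 ≤ rf n := Finset.prod_pos (fun a ha => (hprimesR a ha).pos)
      have hrN : rf n ≤ N := by
        have hdvd : rf n ∣ n := by
          refine ⟨n.minFac * qf n, ?_⟩
          conv_lhs => rw [heqn]
          ring
        exact le_trans (Nat.le_of_dvd (by omega) hdvd) hnN
      have hrR : rf n ∈ Rfin (ℓ-2) N := mem_Rfin.mpr ⟨⟨hr1, hrN⟩, hrsf, hrcard⟩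
      -- q in Qf
      have hp0 : (0:ℝ) < (n.minFac : ℝ) := by exact_mod_cast hpp.pos
      have hr0 : (0:ℝ) < (rf n : ℝ) := by exact_mod_cast hr1
      have hq0 : (0:ℝ) < (qf n : ℝ) := by exact_mod_cast hqprime.pos
      have hcast : (n:ℝ) = (n.minFac:ℝ) * ((qf n : ℝ) * (rf n : ℝ)) := by exact_mod_cast heqn
      have hq_le : (qf n : ℝ) ≤ x / ((n.minFac:ℝ) * (rf n:ℝ)) := by
        rw [le_div_iff₀ (mul_pos hp0 hr0)]
        calc (qf n:ℝ) * ((n.minFac:ℝ) * (rf n:ℝ)) = (n:ℝ) := by rw [hcast]; ring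
          _ ≤ x := hnx
      have hq_mem1 : qf n ∈ Pfin ⌊x / ((n.minFac:ℝ) * (rf n:ℝ))⌋₊ :=
        mem_Pfin.mpr ⟨hqprime, Nat.le_floor hq_le⟩
      have hprodE_le : (∏ a ∈ n.primeFactors.erase n.minFac, a) ≤ (qf n)^(ℓ-1) := by
        have h1 := Finset.prod_le_pow_card (n.primeFactors.erase n.minFac) id (qf n) hqmax
        rw [hcardE] at h1
        simpa using h1
      have hyq : (n:ℝ) ≤ L^64 * ((qf n:ℝ))^(ℓ-1) := by
        have h1 : (n:ℝ) = (n.minFac:ℝ) * ((∏ a ∈ n.primeFactors.erase n.minFac, a : ℕ):ℝ) := by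
          exact_mod_cast hprod1.symm
        have h2 : ((∏ a ∈ n.primeFactors.erase n.minFac, a : ℕ):ℝ) ≤ ((qf n:ℝ))^(ℓ-1) := by
          exact_mod_cast hprodE_le
        have h2' : (0:ℝ) ≤ ((∏ a ∈ n.primeFactors.erase n.minFac, a : ℕ):ℝ) := by positivity
        rw [h1]
        exact mul_le_mul hmf h2 h2' hy0.le
      have hq_big : x ≤ (qf n:ℝ)^(2*ℓ) := by
        have hxlt : x < L^65 * (qf n:ℝ)^(ℓ-1) := by
          have h1 : x / L < L^64 * (qf n:ℝ)^(ℓ-1) := lt_of_lt_of_le hnbig hyq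
          have h2 := (div_lt_iff₀ hL0).mp h1
          calc x < L^64 * (qf n:ℝ)^(ℓ-1) * L := h2
            _ = L^65 * (qf n:ℝ)^(ℓ-1) := by ring
        have hL65 : L^65 ≤ Real.sqrt x := by
          have h1 : Real.sqrt (L^130) ≤ Real.sqrt x := Real.sqrt_le_sqrt h130
          have h2 : Real.sqrt (L^130) = L^65 := by
            rw [show L^130 = (L^65)^2 by ring, Real.sqrt_sq (by positivity)]
          linarith
        have hQ0 : (0:ℝ) ≤ (qf n:ℝ)^(ℓ-1) := by positivity
        have hsqrt0 : (0:ℝ) < Real.sqrt x := Real.sqrt_pos.mpr hx0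
        have h5 : Real.sqrt x * Real.sqrt x < Real.sqrt x * ((qf n:ℝ)^(ℓ-1)) := by
          calc Real.sqrt x * Real.sqrt x = x := Real.mul_self_sqrt hx0.le
            _ < L^65 * (qf n:ℝ)^(ℓ-1) := hxlt
            _ ≤ Real.sqrt x * ((qf n:ℝ)^(ℓ-1)) := mul_le_mul_of_nonneg_right hL65 hQ0
        have hsq : Real.sqrt x ≤ (qf n:ℝ)^(ℓ-1) := le_of_lt ((mul_lt_mul_iff_right₀ hsqrt0).mp h5)
        have h2l : x ≤ ((qf n:ℝ)^(ℓ-1))^2 := by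
          have h6 := mul_self_le_mul_self (Real.sqrt_nonneg x) hsq
          rw [Real.mul_self_sqrt hx0.le] at h6
          calc x ≤ (qf n:ℝ)^(ℓ-1) * ((qf n:ℝ)^(ℓ-1)) := h6
            _ = ((qf n:ℝ)^(ℓ-1))^2 := (sq _).symm
        have hq1 : (1:ℝ) ≤ (qf n:ℝ) := by exact_mod_cast hqprime.one_lt.le
        calc x ≤ ((qf n:ℝ)^(ℓ-1))^2 := h2l
          _ = (qf n:ℝ)^((ℓ-1)*2) := (pow_mul _ _ _).symm
          _ ≤ (qf n:ℝ)^(2*ℓ) := pow_le_pow_right₀ hq1 (by omega)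
      have hq_mem : qf n ∈ Qf n.minFac (rf n) := by
        rw [hQf]
        exact Finset.mem_filter.mpr ⟨hq_mem1, hq_big⟩
      exact ⟨heqn, hpY, hrR, hq_mem⟩
    -- injection into sigma
    set target := ((Pfin Y) ×ˢ (Rfin (ℓ-2) N)).sigma (fun z => Qf z.1 z.2) with htarget
    have hcardT₂ : T₂.card ≤ target.card := by
      apply Finset.card_le_card_of_injOn
        (fun n => (⟨(n.minFac, rf n), qf n⟩ : (_ : ℕ × ℕ) × ℕ))
      · intro n hn
        obtain ⟨_, hp, hr, hq⟩ := key2 n hn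
        exact Finset.mem_sigma.mpr ⟨Finset.mem_product.mpr ⟨hp, hr⟩, hq⟩
      · intro n₁ h₁ n₂ h₂ heq
        simp only [Sigma.mk.inj_iff, Prod.mk.injEq, heq_eq_eq] at heq
        obtain ⟨⟨e1, e2⟩, e3⟩ := heq
        have k₁ := (key2 n₁ (Finset.mem_coe.mp h₁)).1
        have k₂ := (key2 n₂ (Finset.mem_coe.mp h₂)).1
        rw [e1, e2, e3] at k₁
        rw [k₁, ← k₂]
    have htargetcard : (target.card : ℝ)
        = ∑ z ∈ (Pfin Y) ×ˢ (Rfin (ℓ-2) N), ((Qf z.1 z.2).card : ℝ) := by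
      rw [htarget, Finset.card_sigma]
      push_cast
      rfl
    -- bound each Qf card
    have hQbound : ∀ z ∈ (Pfin Y) ×ˢ (Rfin (ℓ-2) N),
        ((Qf z.1 z.2).card : ℝ) ≤ (3*(ℓ:ℝ)) * (x/L) * (1/(z.1:ℝ)) * (1/(z.2:ℝ)) := by
      rintro ⟨p, r⟩ hz
      obtain ⟨hp, hr⟩ := Finset.mem_product.mp hz
      have hp2 : 2 ≤ p := (mem_Pfin.mp hp).1.two_le
      have hr1 : 1 ≤ r := (mem_Rfin.mp hr).1.1
      have hp0 : (0:ℝ) < (p:ℝ) := by exact_mod_cast Nat.lt_of_lt_of_le (by norm_num) hp2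
      have hr0 : (0:ℝ) < (r:ℝ) := by exact_mod_cast hr1
      have hl0 : (0:ℝ) < (ℓ:ℝ) := by exact_mod_cast Nat.lt_of_lt_of_le (by norm_num) hℓ
      have hpos : (0:ℝ) < L/(2*(ℓ:ℝ)) := by positivity
      have hlogq : ∀ q ∈ Qf p r, L / (2*(ℓ:ℝ)) ≤ Real.log q := by
        intro q hq
        rw [hQf] at hq
        obtain ⟨hq1, hq2⟩ := Finset.mem_filter.mp hq
        have h1 : L ≤ Real.log ((q:ℝ)^(2*ℓ)) := Real.log_le_log hx0 hq2
        rw [Real.log_pow] at h1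
        rw [div_le_iff₀ (by positivity)]
        calc L ≤ ((2*ℓ : ℕ):ℝ) * Real.log q := h1
          _ = Real.log q * (2*(ℓ:ℝ)) := by push_cast; ring
      have hcardQ : ((Qf p r).card : ℝ) * (L/(2*(ℓ:ℝ))) ≤ (x/((p:ℝ)*(r:ℝ))) * Real.log 4 := by
        have h1 : ((Qf p r).card : ℝ) * (L/(2*(ℓ:ℝ))) ≤ ∑ q ∈ Qf p r, Real.log q := by
          simpa using Finset.card_nsmul_le_sum (Qf p r) (fun q => Real.log q)
            (L/(2*(ℓ:ℝ))) hlogq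
        have h2 : ∑ q ∈ Qf p r, Real.log q
            ≤ ∑ q ∈ Pfin ⌊x/((p:ℝ)*(r:ℝ))⌋₊, Real.log q := by
          rw [hQf]
          apply Finset.sum_le_sum_of_subset_of_nonneg (Finset.filter_subset _ _)
          intro q hq _
          exact Real.log_nonneg (by exact_mod_cast (mem_Pfin.mp hq).1.one_lt.le)
        have h3 := sum_log_Pfin ⌊x/((p:ℝ)*(r:ℝ))⌋₊
        have h4 : ((⌊x/((p:ℝ)*(r:ℝ))⌋₊ : ℕ):ℝ) ≤ x/((p:ℝ)*(r:ℝ)) :=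
          Nat.floor_le (by positivity)
        have hlog4 : (0:ℝ) ≤ Real.log 4 := Real.log_nonneg (by norm_num)
        nlinarith [h1, h2, h3, h4]
      have h5 : ((Qf p r).card:ℝ) ≤ ((x/((p:ℝ)*(r:ℝ))) * Real.log 4)/(L/(2*(ℓ:ℝ))) := by
        rw [le_div_iff₀ hpos]
        exact hcardQ
      refine h5.trans ?_
      rw [div_le_iff₀ hpos]
      have hexp : (3*(ℓ:ℝ) * (x/L) * (1/(p:ℝ)) * (1/(r:ℝ))) * (L/(2*(ℓ:ℝ)))
          = (x/((p:ℝ)*(r:ℝ))) * (3/2) := by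
        field_simp
      rw [hexp]
      have hxpr : (0:ℝ) ≤ x/((p:ℝ)*(r:ℝ)) := by positivity
      nlinarith [log_four_lt, hxpr]
    -- sum it up
    have hsumQ : (T₂.card : ℝ) ≤ (3*(ℓ:ℝ)) * (x/L) *
        ((∑ p ∈ Pfin Y, (1/(p:ℝ))) * (∑ r ∈ Rfin (ℓ-2) N, (1/(r:ℝ)))) := by
      calc (T₂.card:ℝ) ≤ (target.card:ℝ) := by exact_mod_cast hcardT₂
        _ = ∑ z ∈ (Pfin Y) ×ˢ (Rfin (ℓ-2) N), ((Qf z.1 z.2).card : ℝ) := htargetcard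
        _ ≤ ∑ z ∈ (Pfin Y) ×ˢ (Rfin (ℓ-2) N), (3*(ℓ:ℝ)) * (x/L) * (1/(z.1:ℝ)) * (1/(z.2:ℝ)) :=
            Finset.sum_le_sum hQbound
        _ = (3*(ℓ:ℝ)) * (x/L) *
            ((∑ p ∈ Pfin Y, (1/(p:ℝ))) * (∑ r ∈ Rfin (ℓ-2) N, (1/(r:ℝ)))) := by
            rw [Finset.sum_mul_sum, Finset.mul_sum]
            rw [Finset.sum_product]
            apply Finset.sum_congr rfl
            intro p _
            rw [Finset.mul_sum]
            apply Finset.sum_congr rfl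
            intro r _
            ring
    -- Mertens bounds
    have hy16 : (16:ℝ) ≤ L^64 := by
      calc (16:ℝ) ≤ 2^64 := by norm_num
        _ ≤ L^64 := pow_le_pow_left₀ (by norm_num) hLog2 64
    have hmerty : ∑ p ∈ Pfin Y, (1/(p:ℝ)) ≤ 360 * L3 := by
      have h1 := mertens hy16
      have hlogy : Real.log (L^64) = 64 * L2 := by rw [Real.log_pow]; push_cast; ring
      have hloglogy : Real.log (Real.log (L^64)) = Real.log 64 + L3 := by
        rw [hlogy, Real.log_mul (by norm_num) hL20.ne']
      have hlog64 : Real.log 64 ≤ 4.2 := by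
        rw [show (64:ℝ) = 2^6 by norm_num, Real.log_pow]
        push_cast
        nlinarith [Real.log_two_lt_d9]
      calc ∑ p ∈ Pfin Y, (1/(p:ℝ)) ≤ 60 * Real.log (Real.log (L^64)) := h1
        _ = 60 * (Real.log 64 + L3) := by rw [hloglogy]
        _ ≤ 360 * L3 := by nlinarith
    have hmertx : ∑ p ∈ Pfin N, (1/(p:ℝ)) ≤ 60 * L2 := mertens h16
    have hsumR : ∑ r ∈ Rfin (ℓ-2) N, (1/(r:ℝ)) ≤ (60*L2)^(ℓ-2) := by
      calc ∑ r ∈ Rfin (ℓ-2) N, (1/(r:ℝ)) ≤ (∑ p ∈ Pfin N, (1/(p:ℝ)))^(ℓ-2) := sum_Rfin_le _ _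
        _ ≤ (60*L2)^(ℓ-2) := pow_le_pow_left₀ (sum_inv_Pfin_nonneg N) hmertx _
    -- final assembly
    have hSp0 : (0:ℝ) ≤ ∑ p ∈ Pfin Y, (1/(p:ℝ)) := sum_inv_Pfin_nonneg Y
    have hSr0 : (0:ℝ) ≤ ∑ r ∈ Rfin (ℓ-2) N, (1/(r:ℝ)) :=
      Finset.sum_nonneg (fun i _ => by positivity)
    have hA0 : (0:ℝ) ≤ x/L := by positivity
    have hstep : (T₂.card:ℝ) ≤ (3*(ℓ:ℝ))*(x/L)*((360*L3) * ((60*L2)^(ℓ-2))) := by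
      refine hsumQ.trans ?_
      apply mul_le_mul_of_nonneg_left _ (by positivity)
      exact mul_le_mul hmerty hsumR hSr0 (by positivity)
    have h60 : (60:ℝ)^(ℓ-2) ≤ 60^ℓ := pow_le_pow_right₀ (by norm_num) (by omega)
    have key3 : (1080:ℝ)*(ℓ:ℝ)*(60:ℝ)^(ℓ-2) ≤ 2000*(ℓ:ℝ)*(60:ℝ)^ℓ := by
      have hl0 : (0:ℝ) ≤ (ℓ:ℝ) := by positivity
      nlinarith [h60, pow_nonneg (by norm_num : (0:ℝ) ≤ 60) (ℓ-2)]
    have hcoef : (3*(ℓ:ℝ))*(x/L)*((360*L3) * ((60*L2)^(ℓ-2)))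
        ≤ 2000*(ℓ:ℝ)*60^ℓ * ((x/L) * L2^(ℓ-2) * L3) := by
      rw [mul_pow]
      calc (3*(ℓ:ℝ))*(x/L)*((360*L3) * ((60:ℝ)^(ℓ-2) * L2^(ℓ-2)))
          = (1080*(ℓ:ℝ)*(60:ℝ)^(ℓ-2)) * ((x/L) * L2^(ℓ-2) * L3) := by ring
        _ ≤ (2000*(ℓ:ℝ)*(60:ℝ)^ℓ) * ((x/L) * L2^(ℓ-2) * L3) :=
            mul_le_mul_of_nonneg_right key3 (by positivity)
        _ = 2000*(ℓ:ℝ)*60^ℓ * ((x/L) * L2^(ℓ-2) * L3) := by ring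
    have hP2one : (1:ℝ) ≤ L2^(ℓ-2) := one_le_pow₀ hL2
    have hT1' : (T₁.card:ℝ) ≤ (x/L) * L2^(ℓ-2) * L3 := by
      calc (T₁.card:ℝ) ≤ x/L := hcardT₁
        _ ≤ (x/L) * L2^(ℓ-2) := le_mul_of_one_le_right hA0 hP2one
        _ ≤ (x/L) * L2^(ℓ-2) * L3 :=
            le_mul_of_one_le_right (by positivity) hL3
    have hzpow : L2 ^ ((ℓ:ℤ) - 2) = L2 ^ (ℓ-2 : ℕ) := by
      rw [show ((ℓ:ℤ) - 2) = ((ℓ - 2 : ℕ) : ℤ) by omega, zpow_natCast]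
    rw [hzpow]
    calc (T.card : ℝ) = (T₁.card:ℝ) + (T₂.card:ℝ) := by rw [hTsplit]; push_cast; ring
      _ ≤ (x/L)*L2^(ℓ-2)*L3 + 2000*(ℓ:ℝ)*60^ℓ * ((x/L) * L2^(ℓ-2) * L3) :=
          add_le_add hT1' (hstep.trans hcoef)
      _ = (1 + 2000*(ℓ:ℝ)*60^ℓ) * (x/L) * L2^(ℓ-2) * L3 := by ring
end

section
/- For a prime $p \geq 3$, integers $\ell \geq 1$ and $1 \le |L| \le \ell$, one has $\sum_{g : k_L \mid g,\ g \mid k_L^\infty} \frac{1}{\varphi(g)^{|L|}} \prod_{\substack{q \mid k_L \\ q \ge 3}} \left(1 + \frac{1 - q^{-\nu_q(g)+1}}{q-2}\right)^{\ell - |L|} = \frac{1}{\varphi(k_L)^{|L|}} \prod_{\substack{q \mid k_L \\ q \geq 3}} \left(1 + R_q(|L|)\right)$, where $R_q(n) = \sum_{j=0}^{\ell - n} \binom{\ell-n}{j} \frac{(-1)^j (q-1)^{\ell-n-j}}{(q^{j+n}-1)(q-2)^{\ell-n}}$, for any odd squarefree positive integer $k_L$. -/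
lemma primeFactorHasSum (ℓ n : ℕ) (hn1 : 1 ≤ n) (q : ℕ) (hq3 : 3 ≤ q) :
    HasSum (fun e : ℕ => (1 / ((q : ℝ) ^ e * ((q : ℝ) - 1)) ^ n) *
        (1 + (1 - (q : ℝ) ^ (-(e : ℤ))) / ((q : ℝ) - 2)) ^ (ℓ - n))
      ((1 / ((q : ℝ) - 1) ^ n) * (1 + ∑ j ∈ Finset.range (ℓ - n + 1),
        ((ℓ - n).choose j : ℝ) * ((-1) ^ j * ((q : ℝ) - 1) ^ (ℓ - n - j) /
          (((q : ℝ) ^ (j + n) - 1) * ((q : ℝ) - 2) ^ (ℓ - n))))) := by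
  set m := ℓ - n with hm
  have hQ3 : (3 : ℝ) ≤ (q : ℝ) := by exact_mod_cast hq3
  have hQ0 : (0 : ℝ) < q := by linarith
  have hQ1 : ((q : ℝ) - 1) ≠ 0 := by nlinarith
  have hQ2 : ((q : ℝ) - 2) ≠ 0 := by nlinarith
  have hQne : (q : ℝ) ≠ 0 := ne_of_gt hQ0
  have hQpow : ∀ j : ℕ, ((q : ℝ) ^ (n + j) - 1) ≠ 0 := by
    intro j
    have : (1 : ℝ) < (q : ℝ) ^ (n + j) := one_lt_pow₀ (by linarith) (by omega)
    linarith
  set c : ℕ → ℝ := fun j => (m.choose j : ℝ) * (-1) ^ j * ((q : ℝ) - 1) ^ (m - j) /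
      (((q : ℝ) - 1) ^ n * ((q : ℝ) - 2) ^ m) with hc
  have key : ∀ e : ℕ, (1 / ((q : ℝ) ^ e * ((q : ℝ) - 1)) ^ n) *
      (1 + (1 - (q : ℝ) ^ (-(e : ℤ))) / ((q : ℝ) - 2)) ^ m
      = ∑ j ∈ Finset.range (m + 1), c j * ((1 / (q : ℝ)) ^ (n + j)) ^ e := by
    intro e
    have hz : (q : ℝ) ^ (-(e : ℤ)) = (1 / (q : ℝ)) ^ e := by
      rw [zpow_neg, zpow_natCast, one_div, inv_pow]
    have h1 : 1 + (1 - (q : ℝ) ^ (-(e : ℤ))) / ((q : ℝ) - 2)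
        = ((-(1 / (q : ℝ)) ^ e) + ((q : ℝ) - 1)) / ((q : ℝ) - 2) := by
      rw [hz]; field_simp; ring
    have h2 : (1 : ℝ) / ((q : ℝ) ^ e * ((q : ℝ) - 1)) ^ n
        = ((1 / (q : ℝ)) ^ e) ^ n * (1 / ((q : ℝ) - 1)) ^ n := by
      simp only [one_div, mul_inv, inv_pow, mul_pow]
    rw [h1, h2, div_pow (-(1 / (q : ℝ)) ^ e + ((q : ℝ) - 1)) ((q : ℝ) - 2) m, add_pow,
      Finset.sum_div, Finset.mul_sum]
    refine Finset.sum_congr rfl fun j hj => ?_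
    rw [hc]
    ring
  have hgeom : ∀ j ∈ Finset.range (m + 1),
      HasSum (fun e : ℕ => c j * ((1 / (q : ℝ)) ^ (n + j)) ^ e)
        (c j * (1 - (1 / (q : ℝ)) ^ (n + j))⁻¹) := by
    intro j _
    refine HasSum.mul_left _ (hasSum_geometric_of_lt_one (by positivity) ?_)
    have h1q : 1 / (q : ℝ) < 1 := by rw [div_lt_one hQ0]; linarith
    calc (1 / (q : ℝ)) ^ (n + j) ≤ (1 / (q : ℝ)) ^ 1 := by
          apply pow_le_pow_of_le_one (by positivity) h1q.le (by omega)
      _ < 1 := by simpa using h1q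
  have htot := hasSum_sum hgeom
  convert htot using 1
  · exact funext key
  have hr : ∀ j : ℕ, (1 - (1 / (q : ℝ)) ^ (n + j))⁻¹ = 1 + 1 / ((q : ℝ) ^ (n + j) - 1) := by
    intro j
    have h2 : ((q : ℝ) ^ (n + j)) ≠ 0 := pow_ne_zero _ hQne
    rw [div_pow, one_pow, one_sub_div h2, inv_div]
    field_simp [hQpow j]
    ring
  have hsplit : ∀ j ∈ Finset.range (m + 1), c j * (1 - (1 / (q : ℝ)) ^ (n + j))⁻¹
      = c j + (1 / ((q : ℝ) - 1) ^ n) * ((m.choose j : ℝ) *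
        ((-1) ^ j * ((q : ℝ) - 1) ^ (m - j) / (((q : ℝ) ^ (j + n) - 1) * ((q : ℝ) - 2) ^ m))) := by
    intro j _
    rw [hr j, hc, add_comm j n]
    have := hQpow j
    field_simp
  rw [Finset.sum_congr rfl hsplit, Finset.sum_add_distrib]
  have hbin : ((q : ℝ) - 2) ^ m
      = ∑ j ∈ Finset.range (m + 1), (-1 : ℝ) ^ j * ((q : ℝ) - 1) ^ (m - j) * (m.choose j : ℝ) := by
    rw [show ((q : ℝ) - 2) = (-1 : ℝ) + ((q : ℝ) - 1) by ring, add_pow]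
  have hfirst : ∑ j ∈ Finset.range (m + 1), c j = 1 / ((q : ℝ) - 1) ^ n := by
    calc ∑ j ∈ Finset.range (m + 1), c j
        = (∑ j ∈ Finset.range (m + 1), (-1 : ℝ) ^ j * ((q : ℝ) - 1) ^ (m - j) * (m.choose j : ℝ))
            / (((q : ℝ) - 1) ^ n * ((q : ℝ) - 2) ^ m) := by
          rw [Finset.sum_div]
          exact Finset.sum_congr rfl fun j _ => by rw [hc]; ring
      _ = ((q : ℝ) - 2) ^ m / (((q : ℝ) - 1) ^ n * ((q : ℝ) - 2) ^ m) := by rw [← hbin]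
      _ = 1 / ((q : ℝ) - 1) ^ n := by
          field_simp [pow_ne_zero _ hQ1, pow_ne_zero _ hQ2]
  rw [hfirst, ← Finset.mul_sum]
  ring

lemma hasSum_pi_fin : ∀ (N : ℕ) (f : Fin N → ℕ → ℝ) (a : Fin N → ℝ),
    (∀ i, HasSum (f i) (a i)) → (∀ i e, 0 ≤ f i e) →
    HasSum (fun v : Fin N → ℕ => ∏ i, f i (v i)) (∏ i, a i) := by
  intro N
  induction N with
  | zero =>
    intro f a _ _
    have : HasSum (fun v : Fin 0 → ℕ => ∏ i, f i (v i))
        (∑ v : Fin 0 → ℕ, ∏ i, f i (v i)) := hasSum_fintype _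
    simpa using this
  | succ N ih =>
    intro f a hf hnn
    have htail := ih (fun i => f i.succ) (fun i => a i.succ) (fun i => hf i.succ)
      (fun i e => hnn i.succ e)
    have hsumm : Summable fun p : ℕ × (Fin N → ℕ) => f 0 p.1 * ∏ i, f (Fin.succ i) (p.2 i) := by
      apply summable_mul_of_summable_norm (f := f 0)
        (g := fun v : Fin N → ℕ => ∏ i, f (Fin.succ i) (v i))
      · refine ((hf 0).summable).congr fun e => ?_
        exact (Real.norm_of_nonneg (hnn 0 e)).symm
      · refine htail.summable.congr fun v => ?_
        refine (Real.norm_of_nonneg ?_).symm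
        exact Finset.prod_nonneg fun i _ => hnn i.succ (v i)
    have hmul := (hf 0).mul htail hsumm
    refine (Equiv.hasSum_iff (f := fun v : Fin (N + 1) → ℕ => ∏ i, f i (v i))
      (Fin.consEquiv fun _ => ℕ)).mp ?_
    rw [Fin.prod_univ_succ]
    convert hmul using 1
    · rfl
    funext p
    simp [Fin.consEquiv, Fin.prod_univ_succ]
lemma hasSum_pi_fintype {ι : Type*} [Fintype ι] (f : ι → ℕ → ℝ) (a : ι → ℝ)
    (hf : ∀ i, HasSum (f i) (a i)) (hnn : ∀ i e, 0 ≤ f i e) :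
    HasSum (fun v : ι → ℕ => ∏ i, f i (v i)) (∏ i, a i) := by
  classical
  let e := Fintype.equivFin ι
  have h := hasSum_pi_fin (Fintype.card ι) (fun j => f (e.symm j)) (fun j => a (e.symm j))
    (fun j => hf _) (fun j x => hnn _ x)
  let E : (Fin (Fintype.card ι) → ℕ) ≃ (ι → ℕ) := Equiv.arrowCongr e.symm (Equiv.refl ℕ)
  rw [← Equiv.prod_comp e.symm a]
  refine (Equiv.hasSum_iff E (f := fun v : ι → ℕ => ∏ i, f i (v i))).mp ?_
  convert h using 1
  funext w
  simp only [Function.comp]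
  refine Fintype.prod_equiv e _ _ fun i => ?_
  simp [E, Equiv.arrowCongr]


open Classical in
theorem euler_product_g_sum (ℓ n : ℕ) (hn1 : 1 ≤ n) (hnℓ : n ≤ ℓ)
    (k : ℕ) (hk : 0 < k) (hodd : Odd k) (hsq : Squarefree k) :
    ∑' g : ℕ, (if k ∣ g ∧ 0 < g ∧ (∀ p : ℕ, p.Prime → p ∣ g → p ∣ k) then
        (1 / (Nat.totient g : ℝ) ^ n) *
          ∏ q ∈ k.primeFactors,
            (1 + (1 - (q : ℝ) ^ (1 - (g.factorization q : ℤ))) / ((q : ℝ) - 2)) ^ (ℓ - n)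
      else 0) =
      (1 / (Nat.totient k : ℝ) ^ n) *
        ∏ q ∈ k.primeFactors,
          (1 + ∑ j ∈ Finset.range (ℓ - n + 1), ((ℓ - n).choose j : ℝ) *
              ((-1) ^ j * ((q : ℝ) - 1) ^ (ℓ - n - j) /
                (((q : ℝ) ^ (j + n) - 1) * ((q : ℝ) - 2) ^ (ℓ - n)))) := by
  classical
  set m := ℓ - n with hm
  set P := k.primeFactors with hP
  set ι := {q // q ∈ P}
  have hk0 : k ≠ 0 := hk.ne'
  have hprimes : ∀ q : ι, Nat.Prime (q : ℕ) := fun q => Nat.prime_of_mem_primeFactors q.2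
  have hq3 : ∀ q ∈ P, 3 ≤ q := by
    intro q hq
    obtain ⟨hqp, hqd, -⟩ := Nat.mem_primeFactors.mp hq
    rcases hqp.two_le.lt_or_eq with h | h
    · omega
    · exfalso
      rw [← h] at hqd
      exact (Nat.not_odd_iff_even.mpr (even_iff_two_dvd.mpr hqd)) hodd
  have hq3' : ∀ q : ι, 3 ≤ (q : ℕ) := fun q => hq3 _ q.2
  -- the indexed summand and its per-prime sums
  set f : ι → ℕ → ℝ := fun q e => (1 / ((q : ℝ) ^ e * ((q : ℝ) - 1)) ^ n) *
      (1 + (1 - (q : ℝ) ^ (-(e : ℤ))) / ((q : ℝ) - 2)) ^ m with hf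
  set a : ι → ℝ := fun q => (1 / ((q : ℝ) - 1) ^ n) * (1 + ∑ j ∈ Finset.range (m + 1),
      (m.choose j : ℝ) * ((-1) ^ j * ((q : ℝ) - 1) ^ (m - j) /
        (((q : ℝ) ^ (j + n) - 1) * ((q : ℝ) - 2) ^ m))) with ha
  have hfa : ∀ q : ι, HasSum (f q) (a q) := fun q => primeFactorHasSum ℓ n hn1 q (hq3' q)
  have hnn : ∀ (q : ι) (e : ℕ), 0 ≤ f q e := by
    intro q e
    have hQ3 : (3 : ℝ) ≤ (q : ℝ) := by exact_mod_cast hq3' q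
    have h1 : (q : ℝ) ^ (-(e : ℤ)) ≤ 1 := by
      rw [zpow_neg]
      exact inv_le_one_of_one_le₀ (one_le_zpow₀ (by linarith) (by positivity))
    have h2 : (0 : ℝ) ≤ (q : ℝ) ^ (-(e : ℤ)) := by positivity
    have hbase : (0 : ℝ) ≤ 1 + (1 - (q : ℝ) ^ (-(e : ℤ))) / ((q : ℝ) - 2) := by
      have : (0 : ℝ) ≤ (1 - (q : ℝ) ^ (-(e : ℤ))) / ((q : ℝ) - 2) :=
        div_nonneg (by linarith) (by linarith)
      linarith
    have hb : (0 : ℝ) ≤ (q : ℝ) ^ e * ((q : ℝ) - 1) :=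
      mul_nonneg (by positivity) (by linarith)
    exact mul_nonneg (div_nonneg zero_le_one (pow_nonneg hb n)) (pow_nonneg hbase m)
  have hPi := hasSum_pi_fintype f a hfa hnn
  -- the reindexing map
  set F : (ι → ℕ) → ℕ := fun v => ∏ q : ι, (q : ℕ) ^ (v q + 1) with hFdef
  have hF0 : ∀ v, F v ≠ 0 := fun v =>
    Finset.prod_ne_zero_iff.mpr fun q _ => pow_ne_zero _ (hprimes q).ne_zero
  have hFfact : ∀ (v : ι → ℕ) (q0 : ι), (F v).factorization q0 = v q0 + 1 := by
    intro v q0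
    rw [hFdef]
    rw [Nat.factorization_prod (fun q _ => pow_ne_zero _ (hprimes q).ne_zero)]
    rw [Finsupp.finset_sum_apply, Finset.sum_eq_single q0]
    · rw [(hprimes q0).factorization_pow, Finsupp.single_eq_same]
    · intro q _ hne
      rw [(hprimes q).factorization_pow]
      exact Finsupp.single_eq_of_ne fun h => hne (Subtype.coe_injective h.symm)
    · intro h; exact absurd (Finset.mem_univ q0) h
  have hFfact' : ∀ (v : ι → ℕ) (q0 : ℕ), q0 ∉ P → (F v).factorization q0 = 0 := by
    intro v q0 hq0
    rw [hFdef]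
    rw [Nat.factorization_prod (fun q _ => pow_ne_zero _ (hprimes q).ne_zero)]
    rw [Finsupp.finset_sum_apply]
    refine Finset.sum_eq_zero fun q _ => ?_
    rw [(hprimes q).factorization_pow]
    exact Finsupp.single_eq_of_ne fun h => hq0 (h ▸ q.2)
  have hFpf : ∀ v, (F v).primeFactors = P := by
    intro v
    ext q0
    rw [← Nat.support_factorization, Finsupp.mem_support_iff]
    constructor
    · intro h
      by_contra hq0
      exact h (hFfact' v q0 hq0)
    · intro h
      rw [hFfact v ⟨q0, h⟩]
      omega
  have hkdvd : ∀ v, k ∣ F v := by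
    intro v
    conv_lhs => rw [← Nat.prod_primeFactors_of_squarefree hsq]
    rw [← hP, ← Finset.prod_coe_sort P (fun q => q)]
    exact Finset.prod_dvd_prod_of_dvd _ _ fun q _ => dvd_pow_self _ (Nat.succ_ne_zero _)
  have hFtot : ∀ v, (F v).totient = ∏ q : ι, ((q : ℕ) ^ (v q) * ((q : ℕ) - 1)) := by
    intro v
    rw [Nat.totient_eq_prod_factorization (hF0 v), Finsupp.prod, Nat.support_factorization,
      hFpf v, ← Finset.prod_coe_sort P]
    exact Finset.prod_congr rfl fun q _ => by rw [hFfact v q]; simp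
  have hFinj : Function.Injective F := by
    intro v v' h
    funext q
    have := congrArg (fun N => N.factorization (q : ℕ)) h
    simp only [hFfact] at this
    omega
  -- some conversions from subtype products to finset products
  have hᵣ : ∀ v : ι → ℕ, (if k ∣ F v ∧ 0 < F v ∧ (∀ p : ℕ, p.Prime → p ∣ F v → p ∣ k) then
        (1 / (Nat.totient (F v) : ℝ) ^ n) *
          ∏ q ∈ P, (1 + (1 - (q : ℝ) ^ (1 - ((F v).factorization q : ℤ))) / ((q : ℝ) - 2)) ^ m
      else 0) = ∏ q : ι, f q (v q) := by
    intro v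
    rw [if_pos]
    · have htotR : ((F v).totient : ℝ) = ∏ q : ι, ((q : ℝ) ^ (v q) * ((q : ℝ) - 1)) := by
        rw [hFtot v]
        push_cast
        refine Finset.prod_congr rfl fun q _ => ?_
        have : 1 ≤ (q : ℕ) := by have := hq3' q; omega
        rw [Nat.cast_sub this, Nat.cast_one]
      have hBprod : ∏ q ∈ P, (1 + (1 - (q : ℝ) ^ (1 - ((F v).factorization q : ℤ))) /
            ((q : ℝ) - 2)) ^ m
          = ∏ q : ι, (1 + (1 - (q : ℝ) ^ (-(v q : ℤ))) / ((q : ℝ) - 2)) ^ m := by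
        rw [← Finset.prod_coe_sort P]
        refine Finset.prod_congr rfl fun q _ => ?_
        rw [hFfact v q]
        norm_num
      rw [htotR, hBprod, hf]
      simp only [one_div]
      rw [← Finset.prod_pow, ← Finset.prod_inv_distrib, ← Finset.prod_mul_distrib]
    · refine ⟨hkdvd v, Nat.pos_of_ne_zero (hF0 v), fun p hp hpd => ?_⟩
      have : p ∈ (F v).primeFactors := Nat.mem_primeFactors.mpr ⟨hp, hpd, hF0 v⟩
      rw [hFpf v] at this
      exact Nat.dvd_of_mem_primeFactors this
  have hcov : ∀ g ∉ Set.range F, (if k ∣ g ∧ 0 < g ∧ (∀ p : ℕ, p.Prime → p ∣ g → p ∣ k) then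
        (1 / (Nat.totient g : ℝ) ^ n) *
          ∏ q ∈ P, (1 + (1 - (q : ℝ) ^ (1 - (g.factorization q : ℤ))) / ((q : ℝ) - 2)) ^ m
      else 0) = 0 := by
    intro g hg
    refine if_neg fun hcnd => hg ?_
    obtain ⟨hkd, hg0, hsub⟩ := hcnd
    refine ⟨fun q => g.factorization ↑q - 1, ?_⟩
    have hfacpos : ∀ q : ι, 1 ≤ g.factorization ↑q := fun q =>
      (hprimes q).factorization_pos_of_dvd hg0.ne' ((Nat.dvd_of_mem_primeFactors q.2).trans hkd)
    have h1 : F (fun q => g.factorization ↑q - 1) = ∏ q : ι, (q : ℕ) ^ (g.factorization ↑q) := by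
      rw [hFdef]
      exact Finset.prod_congr rfl fun q _ => by rw [Nat.sub_add_cancel (hfacpos q)]
    have hPg : P = g.primeFactors := by
      ext q
      constructor
      · intro hq
        exact Nat.mem_primeFactors.mpr ⟨Nat.prime_of_mem_primeFactors hq,
          (Nat.dvd_of_mem_primeFactors hq).trans hkd, hg0.ne'⟩
      · intro hq
        exact Nat.mem_primeFactors.mpr ⟨Nat.prime_of_mem_primeFactors hq,
          hsub q (Nat.prime_of_mem_primeFactors hq) (Nat.dvd_of_mem_primeFactors hq), hk0⟩
    have h2 := Nat.factorization_prod_pow_eq_self hg0.ne'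
    rw [Finsupp.prod, Nat.support_factorization] at h2
    rw [h1, Finset.prod_coe_sort P (fun q => q ^ g.factorization q), hPg]
    exact h2
  have hhs : HasSum (fun g : ℕ => if k ∣ g ∧ 0 < g ∧ (∀ p : ℕ, p.Prime → p ∣ g → p ∣ k) then
        (1 / (Nat.totient g : ℝ) ^ n) *
          ∏ q ∈ P, (1 + (1 - (q : ℝ) ^ (1 - (g.factorization q : ℤ))) / ((q : ℝ) - 2)) ^ m
      else 0) (∏ q : ι, a q) := by
    refine (hFinj.hasSum_iff hcov).mp ?_
    convert hPi using 1
    exact funext fun v => hᵣ v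
  rw [hhs.tsum_eq]
  -- final value computation
  have hktot : (k.totient : ℝ) = ∏ q : ι, ((q : ℝ) - 1) := by
    have h2 := Nat.totient_eq_prod_factorization hk0
    rw [Finsupp.prod, Nat.support_factorization] at h2
    have h3 : ∀ q ∈ P, q ^ (k.factorization q - 1) * (q - 1) = q - 1 := by
      intro q hq
      rw [Nat.factorization_eq_one_of_squarefree hsq (Nat.prime_of_mem_primeFactors hq)
        (Nat.dvd_of_mem_primeFactors hq)]
      simp
    rw [← hP, Finset.prod_congr rfl h3] at h2
    rw [h2, ← Finset.prod_coe_sort P (fun q => q - 1)]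
    push_cast
    refine Finset.prod_congr rfl fun q _ => ?_
    have : 1 ≤ (q : ℕ) := by have := hq3' q; omega
    rw [Nat.cast_sub this, Nat.cast_one]
  rw [hktot, ← Finset.prod_coe_sort P (fun q => (1 + ∑ j ∈ Finset.range (m + 1),
      ((m.choose j : ℝ)) * ((-1) ^ j * ((q : ℝ) - 1) ^ (m - j) /
        (((q : ℝ) ^ (j + n) - 1) * ((q : ℝ) - 2) ^ m))))]
  rw [ha]
  simp only [one_div]
  rw [← Finset.prod_pow, ← Finset.prod_inv_distrib, ← Finset.prod_mul_distrib]
end
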